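/- (Weak Vertical Method) Let M/K be a finite separable extension of function fields with basis {ω₁ = 1, ..., ω_n} of M over K, and w = Σ a_i ω_i ∈ M with a_i ∈ K. Suppose there is a finite set 𝒱 of primes of K such that for each 𝔄 ∈ 𝒱 there is b(𝔄) ∈ K with ord_𝔠(w - b(𝔄)) ≥ e(𝔠/𝔄) for every M-factor 𝔠 of 𝔄. Assume w and all basis elements are integral at all primes of 𝒱, det²(σ_j(ω_i)) has no zeros at primes of 𝒱, and |𝒱| > max{h_K(a_i) : a_i ≠ 0, i = 2,...,n}, where h_K denotes the K-height. Then w ∈ K. -/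

import Mathlib

section Aux
variable {L : Type*} [Field L] (u : L → ℚ)

lemma aux_sum {α : Type*}
    (hadd : ∀ x y : L, x ≠ 0 → y ≠ 0 → x + y ≠ 0 → min (u x) (u y) ≤ u (x + y))
    (r : ℚ) (s : Finset α) (f : α → L)
    (hf : ∀ t ∈ s, f t ≠ 0 → r ≤ u (f t)) :
    (∑ t ∈ s, f t) ≠ 0 → r ≤ u (∑ t ∈ s, f t) := by
  induction s using Finset.cons_induction with
  | empty => simp
  | cons t s hts ih =>
    intro hne
    rw [Finset.sum_cons] at hne ⊢
    rcases eq_or_ne (f t) 0 with h0 | h0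
    · rw [h0, zero_add] at hne ⊢
      exact ih (fun x hx => hf x (Finset.mem_cons_of_mem hx)) hne
    rcases eq_or_ne (∑ x ∈ s, f x) 0 with hs0 | hs0
    · rw [hs0, add_zero] at hne ⊢; exact hf t (Finset.mem_cons_self _ _) h0
    have h1 := hf t (Finset.mem_cons_self _ _) h0
    have h2 := ih (fun x hx => hf x (Finset.mem_cons_of_mem hx)) hs0
    exact le_trans (le_min h1 h2) (hadd _ _ h0 hs0 hne)

lemma aux_one (hmul : ∀ x y : L, x ≠ 0 → y ≠ 0 → u (x * y) = u x + u y) : u 1 = 0 := by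
  have := hmul 1 1 one_ne_zero one_ne_zero
  simp at this; linarith

lemma aux_neg (hmul : ∀ x y : L, x ≠ 0 → y ≠ 0 → u (x * y) = u x + u y)
    (x : L) (hx : x ≠ 0) : u (-x) = u x := by
  have hm1 : u (-1 : L) = 0 := by
    have := hmul (-1) (-1) (by norm_num) (by norm_num)
    simp at this
    rw [aux_one u hmul] at this; linarith
  have := hmul (-1) x (by norm_num) hx
  simpa [hm1] using this

lemma aux_prod {α : Type*}
    (hmul : ∀ x y : L, x ≠ 0 → y ≠ 0 → u (x * y) = u x + u y)
    (s : Finset α) (f : α → L)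
    (hf : ∀ t ∈ s, f t ≠ 0 → 0 ≤ u (f t)) :
    (∏ t ∈ s, f t) ≠ 0 → 0 ≤ u (∏ t ∈ s, f t) := by
  induction s using Finset.cons_induction with
  | empty => intro; simpa using (aux_one u hmul).ge
  | cons t s hts ih =>
    intro hne
    rw [Finset.prod_cons] at hne ⊢
    have h0 : f t ≠ 0 := fun h => hne (by simp [h])
    have hs0 : (∏ x ∈ s, f x) ≠ 0 := fun h => hne (by simp [h])
    rw [hmul _ _ h0 hs0]
    have := ih (fun x hx => hf x (Finset.mem_cons_of_mem hx)) hs0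
    have := hf t (Finset.mem_cons_self _ _) h0
    linarith

lemma aux_det {m : ℕ}
    (hmul : ∀ x y : L, x ≠ 0 → y ≠ 0 → u (x * y) = u x + u y)
    (hadd : ∀ x y : L, x ≠ 0 → y ≠ 0 → x + y ≠ 0 → min (u x) (u y) ≤ u (x + y))
    (B : Matrix (Fin m) (Fin m) L)
    (hB : ∀ i j, B i j ≠ 0 → 0 ≤ u (B i j)) :
    B.det ≠ 0 → 0 ≤ u B.det := by
  rw [Matrix.det_apply]
  apply aux_sum u hadd 0
  intro p _ hp
  have hprodne : (∏ i, B (p i) i) ≠ 0 := by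
    intro h; apply hp; rw [h]; simp
  have hprod : 0 ≤ u (∏ i, B (p i) i) :=
    aux_prod u hmul _ _ (fun i _ => hB _ _) hprodne
  rcases Int.units_eq_one_or (Equiv.Perm.sign p) with h | h
  · rw [h]; simpa using hprod
  · rw [h]
    have h2 : ((-1 : ℤˣ) : ℤ) • (∏ i, B (p i) i) = -(∏ i, B (p i) i) := by simp
    rw [Units.smul_def, h2, aux_neg u hmul _ hprodne]
    exact hprod

end Aux


/-- (Weak Vertical Method.)  Let `M/K` be a finite separable extension of function fields
with embeddings `σ j : M → K̄` over `K`, basis `ω` of `M/K` with `ω 0 = 1`, and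
`w = ∑ aᵢ ωᵢ`.  Let `𝒱` be a finite set of primes of `K`, each given by a (normalized)
valuation `v A` extended to the algebraic closure, such that:
`w` and the `ωᵢ` (and all conjugates) are integral at every `A ∈ 𝒱`;
`det (σ j (ω i)) ^ 2` is a unit at every `A ∈ 𝒱`;
for every `A ∈ 𝒱` there is `b A ∈ K` with `w ≡ b A mod A`, i.e.
`v A (σ j w - b A) ≥ 1` for every conjugate (this encodes
`ord_𝔠 (w - b(𝔄)) ≥ e(𝔠/𝔄)` for every `M`-factor `𝔠` of `𝔄`);
and `|𝒱|` exceeds the `K`-height of every nonzero `aᵢ`, `i ≥ 1` (where the height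
function `hK` satisfies: a nonzero element has no more distinct zeros among `𝒱` than
its height).  Then `w ∈ K`. -/
theorem stmt_15 (K M : Type*) [Field K] [Field M] [Algebra K M]
    [FiniteDimensional K M] [Algebra.IsSeparable K M]
    (n : ℕ) (hn : 0 < n) (ω : Module.Basis (Fin n) K M) (hω1 : ω ⟨0, hn⟩ = 1)
    (a : Fin n → K) (w : M) (hwcoord : w = ∑ i, a i • ω i)
    (σ : Fin n → (M →ₐ[K] AlgebraicClosure K)) (hσ : Function.Injective σ)
    (ι : Type*) (𝒱 : Finset ι)
    (v : ι → AlgebraicClosure K → ℚ)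
    (hzero : ∀ A ∈ 𝒱, v A 0 = 0)
    (hmul : ∀ A ∈ 𝒱, ∀ x y, x ≠ 0 → y ≠ 0 → v A (x * y) = v A x + v A y)
    (hadd : ∀ A ∈ 𝒱, ∀ x y, x ≠ 0 → y ≠ 0 → x + y ≠ 0 →
      min (v A x) (v A y) ≤ v A (x + y))
    (hunif : ∀ A ∈ 𝒱, ∃ B : K, v A (algebraMap K (AlgebraicClosure K) B) = 1)
    (hint : ∀ A ∈ 𝒱, ∀ i j, 0 ≤ v A (σ j (ω i)))
    (hwint : ∀ A ∈ 𝒱, ∀ j, 0 ≤ v A (σ j w))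
    (hdet : ∀ A ∈ 𝒱, v A ((Matrix.of fun i j => σ j (ω i)).det ^ 2) = 0)
    (b : ι → K)
    (hcong : ∀ A ∈ 𝒱, ∀ j, 1 ≤ v A (σ j w - algebraMap K (AlgebraicClosure K) (b A)))
    (hK : K → ℕ)
    (hcount : ∀ x : K, x ≠ 0 →
      (𝒱.filter fun A => 0 < v A (algebraMap K (AlgebraicClosure K) x)).card ≤ hK x)
    (hbig : ∀ i : Fin n, (i : ℕ) ≠ 0 → a i ≠ 0 → hK (a i) < 𝒱.card) :
    ∃ x : K, algebraMap K M x = w := by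
  classical
  open Matrix in
  set E : Matrix (Fin n) (Fin n) (AlgebraicClosure K) :=
    Matrix.of fun i j => σ j (ω i) with hEdef
  have hcardn : Fintype.card (M →ₐ[K] AlgebraicClosure K) = n := by
    rw [AlgHom.card, Module.finrank_eq_card_basis ω, Fintype.card_fin]
  have hbij : Function.Bijective σ :=
    (Fintype.bijective_iff_injective_and_card σ).2 ⟨hσ, by simp [hcardn]⟩
  have hEemb : E = Algebra.embeddingsMatrixReindex K (AlgebraicClosure K) (⇑ω)
      (Equiv.ofBijective σ hbij) := by
    ext i j
    simp [hEdef, Algebra.embeddingsMatrixReindex, Algebra.embeddingsMatrix, Equiv.ofBijective]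
  have hdetE : E.det ≠ 0 := by
    intro h0
    have h2 := Algebra.discr_eq_det_embeddingsMatrixReindex_pow_two K (AlgebraicClosure K) (⇑ω)
      (Equiv.ofBijective σ hbij)
    rw [← hEemb, h0, zero_pow (two_ne_zero)] at h2
    exact Algebra.discr_not_zero_of_basis K ω ((map_eq_zero _).mp h2)
  have hσw : ∀ j, σ j w = ∑ k, algebraMap K (AlgebraicClosure K) (a k) * σ j (ω k) := by
    intro j
    rw [hwcoord, map_sum]
    congr 1; funext k
    rw [Algebra.smul_def, _root_.map_mul, AlgHom.commutes]
  have key : ∀ i : Fin n, (i : ℕ) ≠ 0 → a i = 0 := by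
    intro i hi
    by_contra hai
    have hine : i ≠ ⟨0, hn⟩ := fun h => hi (by simp [h])
    have hmapne : algebraMap K (AlgebraicClosure K) (a i) ≠ 0 :=
      fun h => hai ((map_eq_zero _).mp h)
    have hpos : ∀ A ∈ 𝒱, 0 < v A (algebraMap K (AlgebraicClosure K) (a i)) := by
      intro A hA
      set a' : Fin n → AlgebraicClosure K :=
        fun k => algebraMap K (AlgebraicClosure K) (if k = ⟨0, hn⟩ then a k - b A else a k)
        with ha'
      set c : Fin n → AlgebraicClosure K :=
        fun j => σ j w - algebraMap K (AlgebraicClosure K) (b A) with hc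
      have hsys : E.transpose *ᵥ a' = c := by
        funext j
        show ∑ k, E.transpose j k * a' k = c j
        have hterm : ∀ k, E.transpose j k * a' k =
            algebraMap K (AlgebraicClosure K) (a k) * σ j (ω k) -
            (if k = ⟨0, hn⟩ then algebraMap K (AlgebraicClosure K) (b A) * σ j (ω k) else 0) := by
          intro k
          by_cases hk : k = ⟨0, hn⟩ <;>
            simp [ha', hk, hEdef, Matrix.transpose_apply, map_sub, sub_mul, mul_comm]
        rw [Finset.sum_congr rfl (fun k _ => hterm k), Finset.sum_sub_distrib,
          Finset.sum_ite_eq' Finset.univ (⟨0, hn⟩ : Fin n)]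
        simp [hc, hσw j, hω1, _root_.map_one]
      have hcramer : E.det • a' = (E.transpose).adjugate *ᵥ c := by
        rw [← hsys, Matrix.mulVec_mulVec, Matrix.adjugate_mul, Matrix.det_transpose,
          Matrix.smul_mulVec, Matrix.one_mulVec]
      have heq : E.det * algebraMap K (AlgebraicClosure K) (a i) =
          ∑ j, (E.transpose).adjugate i j * c j := by
        have h := congrFun hcramer i
        simpa [ha', hine, Matrix.mulVec, dotProduct] using h
      have hlhsne : E.det * algebraMap K (AlgebraicClosure K) (a i) ≠ 0 :=
        mul_ne_zero hdetE hmapne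
      have hdet0 : v A E.det = 0 := by
        have h := hdet A hA
        rw [sq, hmul A hA _ _ hdetE hdetE] at h
        linarith
      have hrhs : (1 : ℚ) ≤ v A (∑ j, (E.transpose).adjugate i j * c j) := by
        apply aux_sum (v A) (hadd A hA) 1 _ _ _ (heq ▸ hlhsne)
        intro j _ hne
        have hadjne : (E.transpose).adjugate i j ≠ 0 := fun h => hne (by simp [h])
        have hcne : c j ≠ 0 := fun h => hne (by simp [h])
        rw [hmul A hA _ _ hadjne hcne]
        have hadjv : 0 ≤ v A ((E.transpose).adjugate i j) := by
          rw [Matrix.adjugate_apply] at hadjne ⊢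
          apply aux_det (v A) (hmul A hA) (hadd A hA) _ ?_ hadjne
          intro k l hkl
          rw [Matrix.updateRow_apply] at hkl ⊢
          by_cases hkj : k = j
          · simp only [hkj, if_pos rfl] at hkl ⊢
            rcases eq_or_ne l i with hl | hl
            · rw [hl, Pi.single_eq_same]
              exact (aux_one (v A) (hmul A hA)).ge
            · exact absurd (Pi.single_eq_of_ne hl 1) hkl
          · simp only [if_neg hkj] at hkl ⊢
            exact hint A hA l k
        have hco : (1:ℚ) ≤ v A (c j) := hcong A hA j
        linarith
      have h1 : (1:ℚ) ≤ v A (E.det * algebraMap K (AlgebraicClosure K) (a i)) := heq ▸ hrhs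
      rw [hmul A hA _ _ hdetE hmapne, hdet0, zero_add] at h1
      linarith
    have hcard : 𝒱.card ≤ hK (a i) := by
      have h := hcount (a i) hai
      rwa [Finset.filter_true_of_mem hpos] at h
    exact absurd (hbig i hi hai) (not_lt.2 hcard)
  refine ⟨a ⟨0, hn⟩, ?_⟩
  rw [hwcoord, Finset.sum_eq_single (⟨0, hn⟩ : Fin n)]
  · rw [hω1, Algebra.algebraMap_eq_smul_one]
  · intro k _ hk
    have hk0 : (k : ℕ) ≠ 0 := fun h => hk (Fin.ext h)
    rw [key k hk0, zero_smul]
  · intro h; exact absurd (Finset.mem_univ _) h
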